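/- Let B_1, C_1ᵀ ∈ ℝ^{n_1 × n_1'} and B_2, C_2ᵀ ∈ ℝ^{n_2 × n_2'} satisfy B_1 C_1 = A^{(n_1)} and B_2 C_2 = A^{(n_2)}. Define comb(B_1, B_2) = [ I^{(n_1)} ⊗ B_2 | (S^{(n_1)} B_1) ⊗ 1^{(n_2)} ] ∈ ℝ^{(n_1 n_2) × (n_1 n_2' + n_1')} (horizontal concatenation) and comc(C_1, C_2) as the vertical stacking of I^{(n_1)} ⊗ C_2 on top of C_1 ⊗ (1^{(n_2)})ᵀ, a matrix in ℝ^{(n_1 n_2' + n_1') × (n_1 n_2)}. Then: (a) comb(B_1, B_2) · comc(C_1, C_2) = A^{(n_1 n_2)}; (b) ‖comb(B_1, B_2)‖_{2→∞}² = ‖S^{(n_1)} B_1‖_{2→∞}² + ‖B_2‖_{2→∞}² ≤ ‖B_1‖_{2→∞}² + ‖B_2‖_{2→∞}²; and (c) ‖comc(C_1, C_2)‖_{1→2}² = ‖C_1‖_{1→2}² + ‖C_2‖_{1→2}². -/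

import Mathlib

/-- Squared maximum Euclidean row norm `‖M‖²_{2→∞}`. -/
noncomputable def sqMaxRowNorm {m n : Type*} [Fintype m] [Fintype n]
    (M : Matrix m n ℝ) : ℝ :=
  ⨆ i : m, ∑ j, (M i j) ^ 2

/-- Squared maximum Euclidean column norm `‖M‖²_{1→2}`. -/
noncomputable def sqMaxColNorm {m n : Type*} [Fintype m] [Fintype n]
    (M : Matrix m n ℝ) : ℝ :=
  ⨆ j : n, ∑ i, (M i j) ^ 2

/-- The `n × n` lower triangular all-ones matrix. -/
def allOnesLT (n : ℕ) : Matrix (Fin n) (Fin n) ℝ :=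
  Matrix.of fun i j => if (j : ℕ) ≤ (i : ℕ) then 1 else 0

/-- The lower triangular all-ones matrix of size `n₁ n₂`, indexed by `Fin n₁ × Fin n₂`
in lexicographic order. -/
def allOnesLTProd (n₁ n₂ : ℕ) : Matrix (Fin n₁ × Fin n₂) (Fin n₁ × Fin n₂) ℝ :=
  Matrix.of fun p q =>
    if q.1 < p.1 ∨ (q.1 = p.1 ∧ q.2 ≤ p.2) then 1 else 0

/-- The `n × n` non-cyclic shift matrix `S`, with `S i j = 1` iff `i = j + 1`. -/
def shiftMatrix (n : ℕ) : Matrix (Fin n) (Fin n) ℝ :=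
  Matrix.of fun i j => if (i : ℕ) = (j : ℕ) + 1 then 1 else 0

/-- `comb(B₁, B₂) = [ I ⊗ B₂ | (S B₁) ⊗ 𝟙 ]`, the horizontal concatenation used in the
recursive factorization. -/
def combB {n₁ n₁' n₂ n₂' : ℕ}
    (B₁ : Matrix (Fin n₁) (Fin n₁') ℝ) (B₂ : Matrix (Fin n₂) (Fin n₂') ℝ) :
    Matrix (Fin n₁ × Fin n₂) ((Fin n₁ × Fin n₂') ⊕ Fin n₁') ℝ :=
  Matrix.of fun i j =>
    Sum.elim
      (fun j' : Fin n₁ × Fin n₂' => (if i.1 = j'.1 then (1 : ℝ) else 0) * B₂ i.2 j'.2)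
      (fun j' : Fin n₁' => (shiftMatrix n₁ * B₁) i.1 j') j

/-- `comc(C₁, C₂)`, the vertical stacking of `I ⊗ C₂` on top of `C₁ ⊗ 𝟙ᵀ`. -/
def combC {n₁ n₁' n₂ n₂' : ℕ}
    (C₁ : Matrix (Fin n₁') (Fin n₁) ℝ) (C₂ : Matrix (Fin n₂') (Fin n₂) ℝ) :
    Matrix ((Fin n₁ × Fin n₂') ⊕ Fin n₁') (Fin n₁ × Fin n₂) ℝ :=
  Matrix.of fun i j =>
    Sum.elim
      (fun i' : Fin n₁ × Fin n₂' => (if i'.1 = j.1 then (1 : ℝ) else 0) * C₂ i'.2 j.2)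
      (fun i' : Fin n₁' => C₁ i' j.1) i

lemma aux_iSup_eq_max {ι : Type*} [Fintype ι] [Nonempty ι] (f : ι → ℝ) :
    ∃ i, (⨆ x, f x) = f i ∧ ∀ x, f x ≤ f i := by
  obtain ⟨i, hi⟩ := Finite.exists_max f
  exact ⟨i, le_antisymm (ciSup_le hi) (le_ciSup (Set.Finite.bddAbove (Set.finite_range f)) i), hi⟩

lemma aux_iSup_prod_add {ι κ : Type*} [Fintype ι] [Fintype κ] [Nonempty ι] [Nonempty κ]
    (f : ι → ℝ) (g : κ → ℝ) :
    (⨆ p : ι × κ, (f p.1 + g p.2)) = (⨆ i, f i) + ⨆ j, g j := by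
  obtain ⟨i, hi, hif⟩ := aux_iSup_eq_max f
  obtain ⟨j, hj, hjg⟩ := aux_iSup_eq_max g
  obtain ⟨p, hp, hpf⟩ := aux_iSup_eq_max (fun p : ι × κ => f p.1 + g p.2)
  rw [hi, hj, hp]
  exact le_antisymm (add_le_add (hif p.1) (hjg p.2)) (hpf (i, j))

lemma aux_shift_mul_apply {n m : ℕ} (B : Matrix (Fin n) (Fin m) ℝ) (i : Fin n) (j : Fin m) :
    (shiftMatrix n * B) i j = if h : 0 < (i:ℕ) then B ⟨(i:ℕ) - 1, by omega⟩ j else 0 := by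
  simp only [Matrix.mul_apply, shiftMatrix, Matrix.of_apply, ite_mul, one_mul, zero_mul]
  split
  · next h =>
    rw [Finset.sum_eq_single (⟨(i:ℕ)-1, by omega⟩ : Fin n)]
    · simp; omega
    · intro k _ hk
      rw [if_neg]
      intro hc
      exact hk (by ext; simp; omega)
    · simp
  · next h =>
    apply Finset.sum_eq_zero
    intro k _
    rw [if_neg]; omega

/-- Combining two factorizations of all-ones lower triangular matrices yields a
factorization of the larger all-ones lower triangular matrix, with squared max row
norms adding for the `B`-part and squared max column norms adding for the `C`-part. -/
theorem comb_comc_factorization (n₁ n₁' n₂ n₂' : ℕ)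
    (hn₁ : 1 ≤ n₁) (hn₁' : 1 ≤ n₁') (hn₂ : 1 ≤ n₂) (hn₂' : 1 ≤ n₂')
    (B₁ : Matrix (Fin n₁) (Fin n₁') ℝ) (C₁ : Matrix (Fin n₁') (Fin n₁) ℝ)
    (B₂ : Matrix (Fin n₂) (Fin n₂') ℝ) (C₂ : Matrix (Fin n₂') (Fin n₂) ℝ)
    (h₁ : B₁ * C₁ = allOnesLT n₁) (h₂ : B₂ * C₂ = allOnesLT n₂) :
    combB B₁ B₂ * combC C₁ C₂ = allOnesLTProd n₁ n₂ ∧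
    sqMaxRowNorm (combB B₁ B₂) =
      sqMaxRowNorm (shiftMatrix n₁ * B₁) + sqMaxRowNorm B₂ ∧
    sqMaxRowNorm (combB B₁ B₂) ≤ sqMaxRowNorm B₁ + sqMaxRowNorm B₂ ∧
    sqMaxColNorm (combC C₁ C₂) = sqMaxColNorm C₁ + sqMaxColNorm C₂ := by
  haveI : NeZero n₁ := ⟨by omega⟩
  haveI : NeZero n₂ := ⟨by omega⟩
  haveI : NeZero n₁' := ⟨by omega⟩
  haveI : NeZero n₂' := ⟨by omega⟩
  -- part (a)
  have parta : combB B₁ B₂ * combC C₁ C₂ = allOnesLTProd n₁ n₂ := by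
    ext ⟨i₁, i₂⟩ ⟨j₁, j₂⟩
    have key : (combB B₁ B₂ * combC C₁ C₂) (i₁, i₂) (j₁, j₂) =
        (if i₁ = j₁ then (B₂ * C₂) i₂ j₂ else 0) + ((shiftMatrix n₁ * B₁) * C₁) i₁ j₁ := by
      simp only [Matrix.mul_apply, combB, combC, Matrix.of_apply, Sum.elim_inl, Sum.elim_inr,
        Fintype.sum_sum_type, Fintype.sum_prod_type, ite_mul, mul_ite, one_mul, zero_mul,
        mul_zero, Finset.sum_ite_eq, Finset.sum_ite_eq', Finset.mem_univ, if_true,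
        Finset.sum_ite_irrel, Finset.sum_const_zero]
    rw [key, Matrix.mul_assoc, h₁, h₂, aux_shift_mul_apply]
    by_cases h0 : 0 < (i₁ : ℕ)
    · rw [dif_pos h0]
      simp only [allOnesLT, allOnesLTProd, Matrix.of_apply, Fin.lt_def, Fin.ext_iff]
      split_ifs <;> norm_num <;> omega
    · rw [dif_neg h0]
      simp only [allOnesLT, allOnesLTProd, Matrix.of_apply, Fin.lt_def, Fin.ext_iff]
      split_ifs <;> norm_num <;> omega
  -- row sums of combB
  have rowB : ∀ p : Fin n₁ × Fin n₂, (∑ j, (combB B₁ B₂ p j) ^ 2) =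
      (∑ j, ((shiftMatrix n₁ * B₁) p.1 j) ^ 2) + ∑ j, (B₂ p.2 j) ^ 2 := by
    intro p
    simp only [combB, Matrix.of_apply, Fintype.sum_sum_type, Sum.elim_inl, Sum.elim_inr,
      Fintype.sum_prod_type, mul_pow, ite_pow, one_pow, zero_pow, ite_mul, one_mul, zero_mul,
      Finset.sum_ite_irrel, Finset.sum_const_zero, Finset.sum_ite_eq, Finset.sum_ite_eq',
      Finset.mem_univ, if_true]
    simp
    ring
  have partb : sqMaxRowNorm (combB B₁ B₂) =
      sqMaxRowNorm (shiftMatrix n₁ * B₁) + sqMaxRowNorm B₂ := by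
    unfold sqMaxRowNorm
    rw [← aux_iSup_prod_add (fun i => ∑ j, ((shiftMatrix n₁ * B₁) i j) ^ 2)
      (fun i => ∑ j, (B₂ i j) ^ 2)]
    exact iSup_congr rowB
  have hSle : sqMaxRowNorm (shiftMatrix n₁ * B₁) ≤ sqMaxRowNorm B₁ := by
    unfold sqMaxRowNorm
    apply ciSup_le
    intro i
    by_cases h0 : 0 < (i : ℕ)
    · calc (∑ j, ((shiftMatrix n₁ * B₁) i j) ^ 2)
          = ∑ j, (B₁ ⟨(i:ℕ)-1, by omega⟩ j) ^ 2 := by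
            refine Finset.sum_congr rfl fun j _ => ?_
            rw [aux_shift_mul_apply, dif_pos h0]
      _ ≤ _ := le_ciSup (f := fun i => ∑ j, (B₁ i j) ^ 2)
            (Set.Finite.bddAbove (Set.finite_range _)) _
    · have hz : (∑ j, ((shiftMatrix n₁ * B₁) i j) ^ 2) = 0 := by
        refine Finset.sum_eq_zero fun j _ => ?_
        rw [aux_shift_mul_apply, dif_neg h0]
        norm_num
      rw [hz]
      calc (0:ℝ) ≤ ∑ j, (B₁ i j) ^ 2 := Finset.sum_nonneg fun j _ => sq_nonneg _
      _ ≤ _ := le_ciSup (f := fun i => ∑ j, (B₁ i j) ^ 2)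
            (Set.Finite.bddAbove (Set.finite_range _)) i
  have partc : sqMaxColNorm (combC C₁ C₂) = sqMaxColNorm C₁ + sqMaxColNorm C₂ := by
    have colC : ∀ q : Fin n₁ × Fin n₂, (∑ i, (combC C₁ C₂ i q) ^ 2) =
        (∑ i, (C₁ i q.1) ^ 2) + ∑ i, (C₂ i q.2) ^ 2 := by
      intro q
      simp only [combC, Matrix.of_apply, Fintype.sum_sum_type, Sum.elim_inl, Sum.elim_inr,
        Fintype.sum_prod_type, mul_pow, ite_pow, one_pow, zero_pow, ite_mul, one_mul, zero_mul,
        Finset.sum_ite_irrel, Finset.sum_const_zero, Finset.sum_ite_eq, Finset.sum_ite_eq',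
        Finset.mem_univ, if_true]
      simp
      ring
    unfold sqMaxColNorm
    rw [← aux_iSup_prod_add (fun j => ∑ i, (C₁ i j) ^ 2) (fun j => ∑ i, (C₂ i j) ^ 2)]
    exact iSup_congr colC
  exact ⟨parta, partb, partb ▸ add_le_add hSle (le_refl _), partc⟩
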